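/- Let k ≥ 2, let A be a real k×k matrix, and suppose there is an invertible real k×k matrix W with W A = fromBlocks(λ, 0; 0, T) · W for some λ ∈ ℝ and some real (k−1)×(k−1) matrix T such that I − T is invertible and ‖(I−T)^{-1}‖ ≤ w for a real number w > 0. Then every root μ ∈ ℂ of the characteristic polynomial of A with μ ≠ λ satisfies |1 − μ| ≥ 1/w. -/

import Mathlib

open Matrix Polynomial

/-- The spectral (ℓ²→ℓ²) operator norm of a real matrix. -/
noncomputable def specNorm {p q : Type*} [Fintype p] [Fintype q] [DecidableEq q]
    (A : Matrix p q ℝ) : ℝ :=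
  ‖LinearMap.toContinuousLinearMap (Matrix.toEuclideanLin A)‖

/-- If `W A = fromBlocks(λ,0;0,T) W` with `W` invertible, `I - T` invertible
and `‖(I-T)⁻¹‖ ≤ w` for some `w > 0`, then every root `μ ∈ ℂ` of the characteristic
polynomial of `A` with `μ ≠ λ` satisfies `|1 - μ| ≥ 1/w`. -/
lemma specNorm_nonneg {p q : Type*} [Fintype p] [Fintype q] [DecidableEq q]
    (A : Matrix p q ℝ) : 0 ≤ specNorm A := norm_nonneg _

lemma mulVec_sq_sum_le {n : Type*} [Fintype n] [DecidableEq n]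
    (C : Matrix n n ℝ) (x : n → ℝ) :
    ∑ j, (C.mulVec x j) ^ 2 ≤ (specNorm C) ^ 2 * ∑ i, (x i) ^ 2 := by
  have h := (LinearMap.toContinuousLinearMap (Matrix.toEuclideanLin C)).le_opNorm
      ((WithLp.equiv 2 (n → ℝ)).symm x)
  have hx : ‖(WithLp.equiv 2 (n → ℝ)).symm x‖ = Real.sqrt (∑ i, (x i) ^ 2) := by
    rw [EuclideanSpace.norm_eq]
    simp [sq_abs]
  have hy : ‖LinearMap.toContinuousLinearMap (Matrix.toEuclideanLin C)
      ((WithLp.equiv 2 (n → ℝ)).symm x)‖ = Real.sqrt (∑ j, (C.mulVec x j) ^ 2) := by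
    rw [show (LinearMap.toContinuousLinearMap (Matrix.toEuclideanLin C))
        ((WithLp.equiv 2 (n → ℝ)).symm x) = (WithLp.equiv 2 (n → ℝ)).symm (C.mulVec x) from rfl]
    rw [EuclideanSpace.norm_eq]
    simp [sq_abs]
  rw [hx, hy] at h
  have h1 : (0:ℝ) ≤ Real.sqrt (∑ j, (C.mulVec x j) ^ 2) := Real.sqrt_nonneg _
  have := mul_self_le_mul_self h1 h
  calc ∑ j, (C.mulVec x j) ^ 2
      = Real.sqrt (∑ j, (C.mulVec x j) ^ 2) * Real.sqrt (∑ j, (C.mulVec x j) ^ 2) := by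
        rw [Real.mul_self_sqrt (Finset.sum_nonneg fun _ _ => sq_nonneg _)]
    _ ≤ (specNorm C * Real.sqrt (∑ i, (x i) ^ 2)) * (specNorm C * Real.sqrt (∑ i, (x i) ^ 2)) := this
    _ = (specNorm C) ^ 2 * ∑ i, (x i) ^ 2 := by
        rw [show (specNorm C * Real.sqrt (∑ i, (x i) ^ 2)) * (specNorm C * Real.sqrt (∑ i, (x i) ^ 2))
          = (specNorm C)^2 * (Real.sqrt (∑ i, (x i) ^ 2) * Real.sqrt (∑ i, (x i) ^ 2)) by ring]
        rw [Real.mul_self_sqrt (Finset.sum_nonneg fun _ _ => sq_nonneg _)]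

lemma complex_mulVec_sq_sum_le {n : Type*} [Fintype n] [DecidableEq n]
    (C : Matrix n n ℝ) (v : n → ℂ) :
    ∑ j, ‖(C.map Complex.ofReal).mulVec v j‖ ^ 2
      ≤ (specNorm C) ^ 2 * ∑ i, ‖v i‖ ^ 2 := by
  have hre : ∀ j, ((C.map Complex.ofReal).mulVec v j).re = C.mulVec (fun i => (v i).re) j := by
    intro j
    simp [Matrix.mulVec, dotProduct, Complex.re_sum]
  have him : ∀ j, ((C.map Complex.ofReal).mulVec v j).im = C.mulVec (fun i => (v i).im) j := by
    intro j
    simp [Matrix.mulVec, dotProduct, Complex.im_sum]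
  have habs : ∀ z : ℂ, ‖z‖ ^ 2 = z.re ^ 2 + z.im ^ 2 := by
    intro z; rw [Complex.sq_norm, Complex.normSq_apply]; ring
  calc ∑ j, ‖(C.map Complex.ofReal).mulVec v j‖ ^ 2
      = ∑ j, ((C.mulVec (fun i => (v i).re) j) ^ 2 + (C.mulVec (fun i => (v i).im) j) ^ 2) := by
        refine Finset.sum_congr rfl fun j _ => ?_
        rw [habs, hre, him]
    _ = (∑ j, (C.mulVec (fun i => (v i).re) j) ^ 2) + ∑ j, (C.mulVec (fun i => (v i).im) j) ^ 2 :=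
        Finset.sum_add_distrib
    _ ≤ ((specNorm C) ^ 2 * ∑ i, ((v i).re) ^ 2) + (specNorm C) ^ 2 * ∑ i, ((v i).im) ^ 2 :=
        add_le_add (mulVec_sq_sum_le C _) (mulVec_sq_sum_le C _)
    _ = (specNorm C) ^ 2 * ∑ i, ‖v i‖ ^ 2 := by
        rw [← mul_add, ← Finset.sum_add_distrib]
        congr 1
        exact (Finset.sum_congr rfl fun i _ => (habs (v i)).symm)

lemma eval_charpoly' {n : Type*} [Fintype n] [DecidableEq n] (M : Matrix n n ℂ) (t : ℂ) :
    M.charpoly.eval t = (t • (1 : Matrix n n ℂ) - M).det := by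
  rw [Matrix.charpoly, ← Polynomial.coe_evalRingHom, RingHom.map_det]
  congr 1
  ext i j
  rw [RingHom.mapMatrix_apply, Matrix.map_apply]
  by_cases h : i = j
  · subst h; simp [Matrix.charmatrix_apply_eq]
  · simp [Matrix.charmatrix_apply_ne _ _ _ h, Matrix.one_apply_ne h]

theorem stmt_18 {k : ℕ} (hk : 2 ≤ k)
    (A W : Matrix (Fin 1 ⊕ Fin (k - 1)) (Fin 1 ⊕ Fin (k - 1)) ℝ)
    (hW : IsUnit W)
    (lam : ℝ) (T : Matrix (Fin (k - 1)) (Fin (k - 1)) ℝ)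
    (hWA : W * A = Matrix.fromBlocks (Matrix.of fun _ _ => lam) 0 0 T * W)
    (hT : IsUnit (1 - T))
    (w : ℝ) (hw : 0 < w) (hTw : specNorm (1 - T)⁻¹ ≤ w) :
    ∀ μ : ℂ, (A.charpoly.map (algebraMap ℝ ℂ)).IsRoot μ → μ ≠ (lam : ℂ) →
      1 / w ≤ ‖1 - μ‖ := by
  intro μ hroot hne
  set f : ℝ →+* ℂ := algebraMap ℝ ℂ with hf
  set F := Matrix.fromBlocks (Matrix.of fun _ _ => lam) 0 0 T with hF
  -- Step 1: det (μ•1 - A_ℂ) = 0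
  have h1 : (μ • (1 : Matrix (Fin 1 ⊕ Fin (k-1)) (Fin 1 ⊕ Fin (k-1)) ℂ) - A.map f).det = 0 := by
    rw [← eval_charpoly']
    rw [← Matrix.charpoly_map] at hroot
    exact hroot
  -- Step 2: conjugation
  have hWA' : W.map f * A.map f = F.map f * W.map f := by
    rw [← Matrix.map_mul, ← Matrix.map_mul, hWA]
  have hconj : W.map f * (μ • 1 - A.map f) = (μ • 1 - F.map f) * W.map f := by
    rw [Matrix.mul_sub, Matrix.sub_mul, hWA']
    congr 1
    rw [Matrix.mul_smul, Matrix.smul_mul, Matrix.mul_one, Matrix.one_mul]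
  have hdetW : (W.map f).det ≠ 0 := by
    have hu : IsUnit W.det := (Matrix.isUnit_iff_isUnit_det W).mp hW
    have hd : (W.map f).det = f W.det := by
      rw [RingHom.map_det, RingHom.mapMatrix_apply]
    rw [hd]
    simpa [hf] using Complex.ofReal_ne_zero.mpr hu.ne_zero
  have h2 : (μ • (1 : Matrix (Fin 1 ⊕ Fin (k-1)) (Fin 1 ⊕ Fin (k-1)) ℂ) - F.map f).det = 0 := by
    have := congrArg Matrix.det hconj
    rw [Matrix.det_mul, Matrix.det_mul, h1, mul_zero] at this
    rcases mul_eq_zero.mp this.symm with h | h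
    · exact h
    · exact absurd h hdetW
  -- Step 3: block determinant
  have hblock : μ • (1 : Matrix (Fin 1 ⊕ Fin (k-1)) (Fin 1 ⊕ Fin (k-1)) ℂ) - F.map f
      = Matrix.fromBlocks (μ • 1 - (Matrix.of fun _ _ => (lam:ℂ))) 0 0 (μ • 1 - T.map f) := by
    ext i j
    rcases i with i | i <;> rcases j with j | j <;>
      simp [hF, Matrix.one_apply, hf]
  have h3 : ((μ:ℂ) - (lam:ℂ)) * (μ • (1 : Matrix (Fin (k-1)) (Fin (k-1)) ℂ) - T.map f).det = 0 := by
    rw [← h2, hblock, Matrix.det_fromBlocks_zero₂₁]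
    congr 1
    rw [Matrix.det_fin_one]
    simp [Matrix.one_apply]
  have h4 : (μ • (1 : Matrix (Fin (k-1)) (Fin (k-1)) ℂ) - T.map f).det = 0 := by
    rcases mul_eq_zero.mp h3 with h | h
    · exact absurd (sub_eq_zero.mp h) hne
    · exact h
  -- Step 4: eigenvalue of B = 1 - T
  set ν : ℂ := 1 - μ with hν
  have h5 : (ν • (1 : Matrix (Fin (k-1)) (Fin (k-1)) ℂ) - (1 - T).map f).det = 0 := by
    have he : ν • (1 : Matrix (Fin (k-1)) (Fin (k-1)) ℂ) - (1 - T).map f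
        = -(μ • 1 - T.map f) := by
      rw [Matrix.map_sub _ (map_sub f), Matrix.map_one f f.map_zero f.map_one]
      ext i j
      simp [hν, Matrix.one_apply]
      split_ifs <;> ring
    rw [he, Matrix.det_neg, h4, mul_zero]
  obtain ⟨v, hv0, hmv⟩ := (Matrix.exists_mulVec_eq_zero_iff).mpr h5
  have heig : ((1 - T).map f) *ᵥ v = ν • v := by
    have := hmv
    rw [Matrix.sub_mulVec, Matrix.smul_mulVec, Matrix.one_mulVec, sub_eq_zero] at this
    exact this.symm
  -- Step 5: inverse
  set C := (1 - T)⁻¹ with hC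
  have hCB : C * (1 - T) = 1 := Matrix.nonsing_inv_mul _ ((Matrix.isUnit_iff_isUnit_det _).mp hT)
  have hvv : v = ν • ((C.map f) *ᵥ v) := by
    have : (C.map f) *ᵥ (((1 - T).map f) *ᵥ v) = v := by
      rw [Matrix.mulVec_mulVec, ← Matrix.map_mul, hCB, Matrix.map_one f f.map_zero f.map_one,
        Matrix.one_mulVec]
    rw [heig, Matrix.mulVec_smul] at this
    exact this.symm
  -- Step 6: norm estimate
  set S := ∑ i, ‖v i‖ ^ 2 with hS
  have hSpos : 0 < S := by
    obtain ⟨i, hi⟩ := Function.ne_iff.mp hv0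
    refine Finset.sum_pos' (fun j _ => sq_nonneg _) ⟨i, Finset.mem_univ i, ?_⟩
    exact pow_pos (norm_pos_iff.mpr hi) 2
  have hkey : S ≤ (‖ν‖ * w) ^ 2 * S := by
    calc S = ∑ j, ‖(ν • ((C.map f) *ᵥ v)) j‖ ^ 2 := by
          rw [hS]; exact Finset.sum_congr rfl fun j _ => by rw [← hvv]
      _ = ‖ν‖ ^ 2 * ∑ j, ‖((C.map f) *ᵥ v) j‖ ^ 2 := by
          rw [Finset.mul_sum]
          exact Finset.sum_congr rfl fun j _ => by
            simp [Pi.smul_apply, _root_.map_mul, mul_pow]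
      _ ≤ ‖ν‖ ^ 2 * ((specNorm C) ^ 2 * S) := by
          apply mul_le_mul_of_nonneg_left _ (sq_nonneg _)
          exact complex_mulVec_sq_sum_le C v
      _ ≤ (‖ν‖ * w) ^ 2 * S := by
          rw [mul_pow]
          rw [← mul_assoc]
          apply mul_le_mul_of_nonneg_right _ (le_of_lt hSpos)
          apply mul_le_mul_of_nonneg_left _ (sq_nonneg _)
          exact pow_le_pow_left₀ (specNorm_nonneg C) hTw 2
  have h6 : 1 ≤ (‖ν‖ * w) ^ 2 := by nlinarith
  have h7 : 1 ≤ ‖ν‖ * w := by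
    nlinarith [mul_nonneg (norm_nonneg ν) (le_of_lt hw)]
  rw [div_le_iff₀ hw]
  exact h7
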